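/- Let V and E be finite types with maps s, r : E → V (a finite directed graph), and let D be a C*-algebra. Suppose p : V → D satisfies p_v^* = p_v and p_v · p_v = p_v for all v, and S : E → D satisfies S_e^* S_e = p_{r(e)} for all e, and p_v = Σ_{e : s(e) = v} S_e S_e^* for every v ∈ V that is not a sink (i.e. for which there exists e with s(e) = v). In the matrix algebra Matrix V V D define P_v to be the matrix whose only nonzero entry is p_v in position (v,v), and Ŝ_e to be the matrix whose only nonzero entry is S_e in position (s(e), r(e)). Then: (a) the P_v are mutually orthogonal projections: P_v^* = P_v, P_v · P_v = P_v, and P_v · P_w = 0 for v ≠ w; (b) Ŝ_e^* Ŝ_e = P_{r(e)} for all e; (c) P_v = Σ_{e : s(e) = v} Ŝ_e Ŝ_e^* for every v that is not a sink. That is, {P_v, Ŝ_e} is a Cuntz–Krieger E-family in Matrix V V D. -/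

import Mathlib

lemma stdBasisMatrix_sum' {n : Type*} [DecidableEq n] {A : Type*} [AddCommMonoid A]
    {I : Type*} (t : Finset I) (f : I → A) (i j : n) :
    Matrix.single i j (∑ x ∈ t, f x) = ∑ x ∈ t, Matrix.single i j (f x) := by
  classical
  induction t using Finset.induction with
  | empty => simp [Matrix.single_zero]
  | insert a s h ih => rw [Finset.sum_insert h, Finset.sum_insert h, Matrix.single_add, ih]

lemma star_stdBasisMatrix' {n : Type*} [DecidableEq n] {α : Type*}
    [AddMonoid α] [StarAddMonoid α] (i j : n) (c : α) :
    star (Matrix.single i j c) = Matrix.single j i (star c) := by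
  ext a b
  simp only [Matrix.star_apply, Matrix.single, Matrix.of_apply]
  by_cases h1 : j = a <;> by_cases h2 : i = b <;> simp [h1, h2, and_comm]

theorem statement_10 {V E : Type*} [Fintype V] [DecidableEq V] [Fintype E]
    (s r : E → V)
    (D : Type*) [NonUnitalNormedRing D] [StarRing D] [CStarRing D] [CompleteSpace D]
    -- a free Cuntz-Krieger E-family (p, S) in D
    (p : V → D) (S : E → D)
    (hp1 : ∀ v, star (p v) = p v) (hp2 : ∀ v, p v * p v = p v)
    (hS : ∀ e, star (S e) * S e = p (r e))
    (hck : ∀ v, (∃ e, s e = v) →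
      p v = ∑ e ∈ Finset.univ.filter (fun e => s e = v), S e * star (S e))
    -- the induced matrices P_v and Ŝ_e over D
    (P : V → Matrix V V D) (hP : ∀ v, P v = Matrix.single v v (p v))
    (T : E → Matrix V V D) (hT : ∀ e, T e = Matrix.single (s e) (r e) (S e)) :
    (∀ v, star (P v) = P v) ∧
    (∀ v, P v * P v = P v) ∧
    (∀ v w, v ≠ w → P v * P w = 0) ∧
    (∀ e, star (T e) * T e = P (r e)) ∧
    (∀ v, (∃ e, s e = v) →
      P v = ∑ e ∈ Finset.univ.filter (fun e => s e = v), T e * star (T e)) := by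
  refine ⟨fun v => ?_, fun v => ?_, fun v w hvw => ?_, fun e => ?_, fun v hv => ?_⟩
  · rw [hP, star_stdBasisMatrix', hp1]
  · rw [hP, Matrix.single_mul_single_same, hp2]
  · rw [hP, hP]; exact Matrix.single_mul_single_of_ne (c := p v) (i := v) (j := v) (k := w) (h := hvw) (d := p w)
  · rw [hT, hP, star_stdBasisMatrix', Matrix.single_mul_single_same, hS]
  · have key : ∀ e ∈ Finset.univ.filter (fun e => s e = v),
        T e * star (T e) = Matrix.single v v (S e * star (S e)) := by
      intro e he
      have hse : s e = v := (Finset.mem_filter.mp he).2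
      rw [hT, star_stdBasisMatrix', Matrix.single_mul_single_same, hse]
    rw [hP, hck v hv, Finset.sum_congr rfl key, stdBasisMatrix_sum']
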